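/- Fix integers k ≥ 1 and T ≥ 1, reals σ with 0 < σ ≤ 1/2, a sequence η_t > 0 for 1 ≤ t ≤ T, and nonnegative losses ℓ_t^i ≥ 0 for 1 ≤ t ≤ T, 1 ≤ i ≤ k. Define weights recursively by w₁^i = 1 and w_{t+1}^i = (1−σ)·w_t^i·exp(−η_t ℓ_t^i) + (σ/k)·Σ_{j=1}^k w_t^j·exp(−η_t ℓ_t^j), and set p_t^i := w_t^i / Σ_{j=1}^k w_t^j. Then for every interval [r,s] ⊆ [1,T] and every 1 ≤ i ≤ k: Σ_{t=r}^s η_t·Σ_{j=1}^k p_t^j ℓ_t^j ≤ Σ_{t=r}^s η_t ℓ_t^i + Σ_{t=r}^s η_t²·Σ_{j=1}^k p_t^j (ℓ_t^j)² + log(k/σ) + 2σ·(s−r+1). -/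

import Mathlib

lemma exp_neg_le_quad {x : ℝ} (hx : 0 ≤ x) : Real.exp (-x) ≤ 1 - x + x ^ 2 := by
  have h0 : (0:ℝ) < 1 + x := by linarith
  have h1 : Real.exp (-x) ≤ 1 / (1 + x) := by
    rw [Real.exp_neg, inv_eq_one_div]
    apply one_div_le_one_div_of_le h0
    linarith [Real.add_one_le_exp x]
  have h2 : 1 / (1 + x) ≤ 1 - x + x ^ 2 := by
    rw [div_le_iff₀ h0]; nlinarith
  linarith

lemma neg_log_one_sub_le {σ : ℝ} (h0 : 0 < σ) (h : σ ≤ 1 / 2) :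
    -Real.log (1 - σ) ≤ 2 * σ := by
  have h1 : (0:ℝ) < 1 - σ := by linarith
  have h2 : Real.log (1 - σ)⁻¹ ≤ (1 - σ)⁻¹ - 1 :=
    Real.log_le_sub_one_of_pos (by positivity)
  rw [Real.log_inv] at h2
  have h3 : (1 - σ)⁻¹ ≤ 1 + 2 * σ := by
    rw [inv_eq_one_div, div_le_iff₀ h1]
    nlinarith
  linarith

/-- Time-varying learning-rate version of the fixed-share regret bound (key inequality
in the proof of the variable-η dynamic regret theorem of the paper). -/
theorem fixed_share_regret_bound_time_varying_eta
    (k T : ℕ) (hk : 1 ≤ k) (hT : 1 ≤ T)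
    (σ : ℝ) (hσ0 : 0 < σ) (hσ : σ ≤ 1 / 2)
    (η : ℕ → ℝ) (hη : ∀ t, 1 ≤ t → t ≤ T → 0 < η t)
    (ℓ : ℕ → Fin k → ℝ) (hℓ : ∀ t, 1 ≤ t → t ≤ T → ∀ i, 0 ≤ ℓ t i)
    (w : ℕ → Fin k → ℝ)
    (hw1 : ∀ i, w 1 i = 1)
    (hwrec : ∀ t, 1 ≤ t → t ≤ T → ∀ i,
      w (t + 1) i = (1 - σ) * w t i * Real.exp (-(η t) * ℓ t i)
        + σ / k * ∑ j, w t j * Real.exp (-(η t) * ℓ t j))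
    (p : ℕ → Fin k → ℝ)
    (hp : ∀ t i, p t i = w t i / ∑ j, w t j)
    (r s : ℕ) (hr : 1 ≤ r) (hrs : r ≤ s) (hs : s ≤ T) (i : Fin k) :
    ∑ t ∈ Finset.Icc r s, η t * ∑ j, p t j * ℓ t j
      ≤ ∑ t ∈ Finset.Icc r s, η t * ℓ t i
        + ∑ t ∈ Finset.Icc r s, (η t) ^ 2 * ∑ j, p t j * (ℓ t j) ^ 2
        + Real.log ((k : ℝ) / σ) + 2 * σ * ((s : ℝ) - (r : ℝ) + 1) := by
  have hσ1 : σ < 1 := lt_of_le_of_lt hσ (by norm_num)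
  have hk0 : (0:ℝ) < k := by exact_mod_cast hk
  set W : ℕ → ℝ := fun t => ∑ j, w t j with hWdef
  -- positivity of weights
  have hwpos : ∀ t, 1 ≤ t → t ≤ T + 1 → ∀ j, 0 < w t j := by
    intro t ht
    induction t, ht using Nat.le_induction with
    | base => intro _ j; rw [hw1]; norm_num
    | succ t ht ih =>
      intro htT j
      have htT' : t ≤ T := by omega
      have h1 : ∀ j, 0 < w t j := ih (by omega)
      rw [hwrec t ht htT']
      have hpos1 : 0 < (1 - σ) * w t j * Real.exp (-(η t) * ℓ t j) :=
        mul_pos (mul_pos (by linarith) (h1 j)) (Real.exp_pos _)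
      have hpos2 : 0 ≤ σ / (k:ℝ) * ∑ j, w t j * Real.exp (-(η t) * ℓ t j) := by
        apply mul_nonneg (by positivity)
        apply Finset.sum_nonneg
        intro j _
        exact le_of_lt (mul_pos (h1 j) (Real.exp_pos _))
      linarith
  have hWpos : ∀ t, 1 ≤ t → t ≤ T + 1 → 0 < W t := by
    intro t h1 h2
    apply Finset.sum_pos (fun j _ => hwpos t h1 h2 j)
    exact Finset.univ_nonempty_iff.mpr ⟨⟨0, hk⟩⟩
  -- recursion for W
  have hWrec : ∀ t, 1 ≤ t → t ≤ T →
      W (t + 1) = ∑ j, w t j * Real.exp (-(η t) * ℓ t j) := by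
    intro t h1 h2
    show (∑ j, w (t+1) j) = _
    rw [Finset.sum_congr rfl (fun j _ => hwrec t h1 h2 j)]
    rw [Finset.sum_add_distrib, Finset.sum_const, Finset.card_univ,
      Fintype.card_fin, nsmul_eq_mul]
    have e1 : ∀ j : Fin k, (1 - σ) * w t j * Real.exp (-(η t) * ℓ t j)
        = (1 - σ) * (w t j * Real.exp (-(η t) * ℓ t j)) := fun j => by ring
    simp only [e1]
    rw [← Finset.mul_sum]
    have e2 : (k:ℝ) * (σ / k * ∑ j, w t j * Real.exp (-(η t) * ℓ t j))
        = σ * ∑ j, w t j * Real.exp (-(η t) * ℓ t j) := by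
      field_simp
    rw [e2]
    ring
  -- p sums to one, p positive
  have hpsum : ∀ t, 1 ≤ t → t ≤ T → (∑ j, p t j) = 1 := by
    intro t h1 h2
    rw [Finset.sum_congr rfl fun j _ => hp t j, ← Finset.sum_div]
    exact div_self (ne_of_gt (hWpos t h1 (by omega)))
  have hppos : ∀ t, 1 ≤ t → t ≤ T → ∀ j, 0 < p t j := by
    intro t h1 h2 j
    rw [hp t j]
    exact div_pos (hwpos t h1 (by omega) j) (hWpos t h1 (by omega))
  -- per-step upper bound on log ratio
  have key : ∀ t, 1 ≤ t → t ≤ T →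
      Real.log (W (t + 1)) - Real.log (W t)
        ≤ -(η t * ∑ j, p t j * ℓ t j) + (η t) ^ 2 * ∑ j, p t j * (ℓ t j) ^ 2 := by
    intro t h1 h2
    have hWt : 0 < W t := hWpos t h1 (by omega)
    have hWt1 : 0 < W (t + 1) := hWpos (t+1) (by omega) (by omega)
    set C : ℝ := 1 - η t * ∑ j, p t j * ℓ t j + (η t) ^ 2 * ∑ j, p t j * (ℓ t j) ^ 2 with hC
    have hub : W (t + 1) ≤ W t * C := by
      rw [hWrec t h1 h2]
      have hwp : ∀ j, w t j = W t * p t j := by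
        intro j; rw [hp t j]; field_simp
        exact (mul_div_cancel_right₀ (b := W t) (a := w t j) (ne_of_gt hWt)).symm
      calc ∑ j, w t j * Real.exp (-(η t) * ℓ t j)
          ≤ ∑ j, w t j * (1 - η t * ℓ t j + (η t * ℓ t j) ^ 2) := by
            apply Finset.sum_le_sum
            intro j _
            apply mul_le_mul_of_nonneg_left _ (le_of_lt (hwpos t h1 (by omega) j))
            have hx : 0 ≤ η t * ℓ t j := mul_nonneg (le_of_lt (hη t h1 h2)) (hℓ t h1 h2 j)
            have := exp_neg_le_quad hx
            calc Real.exp (-(η t) * ℓ t j) = Real.exp (-(η t * ℓ t j)) := by ring_nf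
            _ ≤ _ := this
        _ = W t * C := by
            rw [Finset.sum_congr rfl (fun j _ => by rw [hwp j])]
            have hps := hpsum t h1 h2
            simp only [hC]
            have expand : ∀ j : Fin k, W t * p t j * (1 - η t * ℓ t j + (η t * ℓ t j) ^ 2)
                = W t * p t j - W t * η t * (p t j * ℓ t j)
                  + W t * (η t) ^ 2 * (p t j * (ℓ t j) ^ 2) := fun j => by ring
            simp only [expand]
            rw [Finset.sum_add_distrib, Finset.sum_sub_distrib, ← Finset.mul_sum,
              ← Finset.mul_sum, ← Finset.mul_sum, hps]
            ring
    have hCpos : 0 < C := by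
      by_contra h
      push_neg at h
      nlinarith
    have := Real.log_le_log hWt1 hub
    rw [Real.log_mul (ne_of_gt hWt) (ne_of_gt hCpos)] at this
    have hlogC : Real.log C ≤ C - 1 := Real.log_le_sub_one_of_pos hCpos
    simp only [hC] at hlogC ⊢
    linarith
  -- telescoping
  have tele : ∀ u, r ≤ u → u ≤ T →
      ∑ t ∈ Finset.Icc r u, (Real.log (W (t + 1)) - Real.log (W t))
        = Real.log (W (u + 1)) - Real.log (W r) := by
    intro u hu
    induction u, hu using Nat.le_induction with
    | base => intro _; rw [Finset.Icc_self, Finset.sum_singleton]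
    | succ u hu ih =>
      intro huT
      rw [Finset.sum_Icc_succ_top (by omega), ih (by omega)]
      ring
  -- lower bound: w r i ≥ (σ/k) * W r
  have hwr : σ / k * W r ≤ w r i := by
    rcases Nat.eq_or_lt_of_le hr with h | h
    · rw [← h, hw1 i]
      have hW1 : W 1 = k := by
        show (∑ j : Fin k, w 1 j) = k
        rw [Finset.sum_congr rfl (fun j _ => hw1 j)]
        simp
      rw [hW1]
      rw [div_mul_cancel₀ _ (ne_of_gt hk0)]
      linarith
    · obtain ⟨u, rfl⟩ : ∃ u, r = u + 1 := ⟨r - 1, by omega⟩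
      have hu1 : 1 ≤ u := by omega
      have huT : u ≤ T := by omega
      rw [hwrec u hu1 huT i, ← hWrec u hu1 huT]
      have : 0 ≤ (1 - σ) * w u i * Real.exp (-(η u) * ℓ u i) :=
        le_of_lt (mul_pos (mul_pos (by linarith) (hwpos u hu1 (by omega) i)) (Real.exp_pos _))
      linarith
  -- lower bound induction
  have lower : ∀ u, r ≤ u → u ≤ s →
      σ / k * W r * ∏ t ∈ Finset.Icc r u, ((1 - σ) * Real.exp (-(η t) * ℓ t i))
        ≤ w (u + 1) i := by
    intro u hu
    induction u, hu using Nat.le_induction with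
    | base =>
      intro _
      rw [Finset.Icc_self, Finset.prod_singleton]
      rw [hwrec r hr (by omega) i]
      have h2 : 0 ≤ σ / (k:ℝ) * ∑ j, w r j * Real.exp (-(η r) * ℓ r j) := by
        apply mul_nonneg (by positivity)
        apply Finset.sum_nonneg
        intro j _
        exact le_of_lt (mul_pos (hwpos r hr (by omega) j) (Real.exp_pos _))
      have hfac : (0:ℝ) ≤ (1 - σ) * Real.exp (-(η r) * ℓ r i) :=
        le_of_lt (mul_pos (by linarith) (Real.exp_pos _))
      have h3 : σ / k * W r * ((1 - σ) * Real.exp (-(η r) * ℓ r i))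
          ≤ (1 - σ) * w r i * Real.exp (-(η r) * ℓ r i) := by
        nlinarith [mul_le_mul_of_nonneg_left hwr hfac]
      linarith
    | succ u hu ih =>
      intro hus
      have hu1 : 1 ≤ u + 1 := by omega
      have huT : u + 1 ≤ T := by omega
      rw [Finset.prod_Icc_succ_top (by omega)]
      rw [hwrec (u+1) hu1 huT i]
      have h2 : 0 ≤ σ / (k:ℝ) * ∑ j, w (u+1) j * Real.exp (-(η (u+1)) * ℓ (u+1) j) := by
        apply mul_nonneg (by positivity)
        apply Finset.sum_nonneg
        intro j _
        exact le_of_lt (mul_pos (hwpos (u+1) hu1 (by omega) j) (Real.exp_pos _))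
      have ih' := ih (by omega)
      have hfac : (0:ℝ) ≤ (1 - σ) * Real.exp (-(η (u+1)) * ℓ (u+1) i) :=
        le_of_lt (mul_pos (by linarith) (Real.exp_pos _))
      have h3 : σ / k * W r * (∏ t ∈ Finset.Icc r u, ((1 - σ) * Real.exp (-(η t) * ℓ t i)))
          * ((1 - σ) * Real.exp (-(η (u+1)) * ℓ (u+1) i))
          ≤ (1 - σ) * w (u+1) i * Real.exp (-(η (u+1)) * ℓ (u+1) i) := by
        nlinarith [mul_le_mul_of_nonneg_right ih' hfac]
      rw [← mul_assoc]
      linarith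
  -- assemble
  have hlower := lower s hrs le_rfl
  have hWr : 0 < W r := hWpos r hr (by omega)
  have hWs1 : 0 < W (s + 1) := hWpos (s+1) (by omega) (by omega)
  have hprodpos : 0 < ∏ t ∈ Finset.Icc r s, ((1 - σ) * Real.exp (-(η t) * ℓ t i)) := by
    apply Finset.prod_pos
    intro t _
    exact mul_pos (by linarith) (Real.exp_pos _)
  have hws1 : w (s+1) i ≤ W (s+1) := by
    apply Finset.single_le_sum (fun j _ => le_of_lt (hwpos (s+1) (by omega) (by omega) j))
      (Finset.mem_univ i)
  have hlog1 : Real.log (σ / k * W r * ∏ t ∈ Finset.Icc r s,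
      ((1 - σ) * Real.exp (-(η t) * ℓ t i))) ≤ Real.log (W (s+1)) :=
    Real.log_le_log (mul_pos (mul_pos (div_pos hσ0 hk0) hWr) hprodpos)
      (le_trans hlower hws1)
  rw [Real.log_mul (ne_of_gt (mul_pos (div_pos hσ0 hk0) hWr)) (ne_of_gt hprodpos),
      Real.log_mul (ne_of_gt (div_pos hσ0 hk0)) (ne_of_gt hWr),
      Real.log_prod (fun t _ => ne_of_gt (mul_pos (by linarith) (Real.exp_pos _)))] at hlog1
  have hlogprod : ∀ t ∈ Finset.Icc r s,
      Real.log ((1 - σ) * Real.exp (-(η t) * ℓ t i))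
        = Real.log (1 - σ) + (-(η t) * ℓ t i) := by
    intro t _
    rw [Real.log_mul (by nlinarith) (ne_of_gt (Real.exp_pos _)), Real.log_exp]
  rw [Finset.sum_congr rfl hlogprod, Finset.sum_add_distrib, Finset.sum_const] at hlog1
  have hcard : (Finset.Icc r s).card = s + 1 - r := Nat.card_Icc r s
  have hsum_upper : ∑ t ∈ Finset.Icc r s, (Real.log (W (t + 1)) - Real.log (W t))
      ≤ ∑ t ∈ Finset.Icc r s, (-(η t * ∑ j, p t j * ℓ t j)
          + (η t) ^ 2 * ∑ j, p t j * (ℓ t j) ^ 2) := by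
    apply Finset.sum_le_sum
    intro t ht
    rw [Finset.mem_Icc] at ht
    exact key t (by omega) (by omega)
  rw [tele s hrs hs] at hsum_upper
  rw [Finset.sum_add_distrib] at hsum_upper
  rw [hcard, nsmul_eq_mul] at hlog1
  -- cast card
  have hcardR : ((s + 1 - r : ℕ) : ℝ) = (s:ℝ) - r + 1 := by
    have : (s + 1 - r : ℕ) = s + 1 - r := rfl
    push_cast [Nat.cast_sub (by omega : r ≤ s + 1)]
    ring
  rw [hcardR] at hlog1
  -- log(k/σ) = - log(σ/k)
  have hlogkσ : Real.log ((k:ℝ) / σ) = -Real.log (σ / (k:ℝ)) := by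
    rw [← Real.log_inv]
    congr 1
    field_simp
  have hneglog := neg_log_one_sub_le hσ0 hσ
  have hsums : ∑ t ∈ Finset.Icc r s, (-(η t) * ℓ t i) = -∑ t ∈ Finset.Icc r s, η t * ℓ t i := by
    rw [← Finset.sum_neg_distrib]
    apply Finset.sum_congr rfl
    intro t _; ring
  rw [hsums] at hlog1
  have hsum_neg : ∑ t ∈ Finset.Icc r s, -(η t * ∑ j, p t j * ℓ t j)
      = -∑ t ∈ Finset.Icc r s, η t * ∑ j, p t j * ℓ t j := by
    rw [← Finset.sum_neg_distrib]
  rw [hsum_neg] at hsum_upper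
  have hn : (0:ℝ) ≤ (s:ℝ) - r + 1 := by
    have : (r:ℝ) ≤ s := by exact_mod_cast hrs
    linarith
  nlinarith [mul_le_mul_of_nonneg_left hneglog hn]
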